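/- Let η : [0,T] → L¹(Ω) be a process with right-continuous sample evaluation t ↦ η_t in L¹, and suppose ℓ(t,y) is uniformly continuous in (t,y) uniformly in ω, strictly increasing in y, with |ℓ(t,y)| ≤ C(1+|y|). Then the map t ↦ L_t(η_t) := inf{x ≥ 0 : E[ℓ(t, x + η_t)] ≥ 0} is right-continuous on [0,T]. -/

import Mathlib

open MeasureTheory

/-- Chaining lemma: a function with modulus bound `ε` at scale `δ` grows at most linearly. -/
lemma chain_mono (f : ℝ → ℝ) (δ ε : ℝ) (hδ : 0 < δ) (hε : 0 ≤ ε)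
    (h : ∀ a b : ℝ, |a - b| ≤ δ → |f a - f b| ≤ ε) :
    ∀ a b : ℝ, |f a - f b| ≤ ε * (|a - b| / δ + 1) := by
  have key : ∀ n : ℕ, ∀ a b : ℝ, a ≤ b → b - a ≤ n * δ → |f a - f b| ≤ n * ε := by
    intro n
    induction n with
    | zero =>
      intro a b hab h1
      have : a = b := le_antisymm hab (by push_cast at h1; linarith)
      simp [this]
    | succ n ih =>
      intro a b hab h1
      rcases le_or_gt (b - a) δ with h2 | h2
      · have e := h a b (by rw [abs_sub_comm, abs_of_nonneg (by linarith)]; linarith)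
        have hn : (0:ℝ) ≤ (n:ℝ) := n.cast_nonneg
        push_cast
        nlinarith
      · have hc : a + δ ≤ b := by linarith
        have e1 : |f a - f (a + δ)| ≤ ε :=
          h a (a + δ) (by rw [abs_sub_comm]; simp [abs_of_nonneg hδ.le])
        have e2 : |f (a + δ) - f b| ≤ n * ε := by
          refine ih (a + δ) b hc ?_
          push_cast at h1 ⊢; linarith
        calc |f a - f b| ≤ |f a - f (a + δ)| + |f (a + δ) - f b| := abs_sub_le _ _ _
          _ ≤ ε + n * ε := add_le_add e1 e2
          _ = ((n + 1 : ℕ) : ℝ) * ε := by push_cast; ring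
  have main : ∀ a b : ℝ, a ≤ b → |f a - f b| ≤ ε * (|a - b| / δ + 1) := by
    intro a b hab
    set n : ℕ := ⌈(b - a) / δ⌉₊ with hn
    have hq : 0 ≤ (b - a) / δ := div_nonneg (by linarith) hδ.le
    have h1 : b - a ≤ n * δ := by
      rw [← div_le_iff₀ hδ]
      exact Nat.le_ceil _
    have h2 : (n : ℝ) ≤ (b - a) / δ + 1 := (Nat.ceil_lt_add_one hq).le
    have h3 := key n a b hab h1
    have habs : |a - b| = b - a := by rw [abs_sub_comm, abs_of_nonneg (by linarith)]
    rw [habs]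
    calc |f a - f b| ≤ n * ε := h3
      _ ≤ ((b - a) / δ + 1) * ε := by nlinarith
      _ = ε * ((b - a) / δ + 1) := by ring
  intro a b
  rcases le_total a b with hab | hab
  · exact main a b hab
  · rw [abs_sub_comm, abs_sub_comm a b]
    exact main b a hab

/-- A pointwise bound yields a bound on the difference of integrals. -/
lemma int_diff_le {Ω : Type*} [MeasurableSpace Ω] (μ : Measure Ω)
    (f g b : Ω → ℝ) (hf : Integrable f μ) (hg : Integrable g μ) (hb : Integrable b μ)
    (h : ∀ ω, |f ω - g ω| ≤ b ω) :
    |(∫ ω, f ω ∂μ) - ∫ ω, g ω ∂μ| ≤ ∫ ω, b ω ∂μ := by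
  rw [← integral_sub hf hg]
  calc |∫ ω, (f ω - g ω) ∂μ| = ‖∫ ω, (f ω - g ω) ∂μ‖ := (Real.norm_eq_abs _).symm
    _ ≤ ∫ ω, ‖f ω - g ω‖ ∂μ := norm_integral_le_integral_norm _
    _ ≤ ∫ ω, b ω ∂μ := by
        refine integral_mono (hf.sub hg).norm hb ?_
        intro ω
        simpa [Real.norm_eq_abs] using h ω

/-- Integrability of `ω ↦ ℓ s (x + η ω)` from linear growth. -/
lemma aux_integrable {Ω : Type*} [MeasurableSpace Ω] (μ : Measure Ω)
    [IsProbabilityMeasure μ]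
    (ℓ : ℝ → ℝ → ℝ) (hUC : UniformContinuous (fun p : ℝ × ℝ => ℓ p.1 p.2))
    (C : ℝ) (hC0 : 0 ≤ C) (hC : ∀ t y : ℝ, |ℓ t y| ≤ C * (1 + |y|))
    (η : Ω → ℝ) (hη : Integrable η μ) (s x : ℝ) :
    Integrable (fun ω => ℓ s (x + η ω)) μ := by
  have hcont : Continuous (ℓ s) := hUC.continuous.comp (Continuous.prodMk_right s)
  have hm : AEStronglyMeasurable (fun ω => ℓ s (x + η ω)) μ :=
    (hcont.comp (continuous_const.add continuous_id)).comp_aestronglyMeasurable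
      hη.aestronglyMeasurable
  refine Integrable.mono ((integrable_const (C * (1 + |x|))).add (hη.abs.const_mul C)) hm ?_
  filter_upwards with ω
  simp only [Real.norm_eq_abs]
  have h1 := hC s (x + η ω)
  have h2 : |x + η ω| ≤ |x| + |η ω| := abs_add_le _ _
  have h3 : |ℓ s (x + η ω)| ≤ C * (1 + |x|) + C * |η ω| := by nlinarith
  exact h3.trans (le_abs_self _)

theorem stmt2
    {Ω : Type*} [MeasurableSpace Ω] (μ : Measure Ω) [IsProbabilityMeasure μ]
    (T : ℝ) (hT : 0 < T)
    (η : ℝ → Ω → ℝ)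
    (hint : ∀ t ∈ Set.Icc (0 : ℝ) T, Integrable (η t) μ)
    (hrc : ∀ t ∈ Set.Ico (0 : ℝ) T,
      Filter.Tendsto (fun s => ∫ ω, |η s ω - η t ω| ∂μ)
        (nhdsWithin t (Set.Ici t)) (nhds 0))
    (ℓ : ℝ → ℝ → ℝ)
    (hUC : UniformContinuous (fun p : ℝ × ℝ => ℓ p.1 p.2))
    (hmono : ∀ t, StrictMono (ℓ t))
    (hgrowth : ∃ C : ℝ, 0 ≤ C ∧ ∀ t y : ℝ, |ℓ t y| ≤ C * (1 + |y|))
    (hfin : ∀ t ∈ Set.Icc (0 : ℝ) T,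
      {x : ℝ | 0 ≤ x ∧ 0 ≤ ∫ ω, ℓ t (x + η t ω) ∂μ}.Nonempty) :
    ∀ t ∈ Set.Ico (0 : ℝ) T,
      ContinuousWithinAt
        (fun s => sInf {x : ℝ | 0 ≤ x ∧ 0 ≤ ∫ ω, ℓ s (x + η s ω) ∂μ})
        (Set.Ici t) t := by
  obtain ⟨C, hC0, hC⟩ := hgrowth
  intro t ht
  obtain ⟨ht0, htT⟩ := ht
  have htmem : t ∈ Set.Icc (0:ℝ) T := ⟨ht0, htT.le⟩
  set F : ℝ → ℝ → ℝ := fun s x => ∫ ω, ℓ s (x + η s ω) ∂μ with hFdef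
  have hF : ∀ s x, (∫ ω, ℓ s (x + η s ω) ∂μ) = F s x := fun _ _ => rfl
  simp only [hF] at hfin ⊢
  -- integrability
  have hInt : ∀ s ∈ Set.Icc (0:ℝ) T, ∀ x : ℝ, Integrable (fun ω => ℓ s (x + η s ω)) μ :=
    fun s hs x => aux_integrable μ ℓ hUC C hC0 hC (η s) (hint s hs) s x
  -- monotonicity in x
  have hFmono : ∀ s ∈ Set.Icc (0:ℝ) T, ∀ x x' : ℝ, x ≤ x' → F s x ≤ F s x' := by
    intro s hs x x' hxx
    exact integral_mono (hInt s hs x) (hInt s hs x')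
      (fun ω => (hmono s).monotone (by linarith))
  -- strict monotonicity in x
  have hFlt : ∀ s ∈ Set.Icc (0:ℝ) T, ∀ x x' : ℝ, x < x' → F s x < F s x' := by
    intro s hs x x' hxx
    have hi := hInt s hs x
    have hi' := hInt s hs x'
    rw [show F s x < F s x' ↔ 0 < F s x' - F s x from (sub_pos).symm, hFdef]
    simp only
    rw [← integral_sub hi' hi]
    have hpos : ∀ ω, 0 < ℓ s (x' + η s ω) - ℓ s (x + η s ω) :=
      fun ω => sub_pos.mpr (hmono s (by linarith))
    rw [integral_pos_iff_support_of_nonneg (fun ω => (hpos ω).le) (hi'.sub hi)]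
    have hsup : (Function.support fun ω => ℓ s (x' + η s ω) - ℓ s (x + η s ω)) = Set.univ := by
      ext ω; simp [Function.support, (hpos ω).ne']
    rw [hsup]
    simp
  -- uniform-continuity modulus
  have hmod : ∀ ε > (0:ℝ), ∃ δ > (0:ℝ), ∀ s s' y y' : ℝ,
      |s - s'| ≤ δ → |y - y'| ≤ δ → |ℓ s y - ℓ s' y'| ≤ ε := by
    intro ε hε
    obtain ⟨δ, hδ, hδ'⟩ := Metric.uniformContinuous_iff.mp hUC ε hε
    refine ⟨δ/2, by linarith, ?_⟩
    intro s s' y y' h1 h2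
    have hd : dist ((s, y) : ℝ × ℝ) (s', y') < δ := by
      rw [Prod.dist_eq]
      simp only [Real.dist_eq]
      exact max_lt (lt_of_le_of_lt h1 (by linarith)) (lt_of_le_of_lt h2 (by linarith))
    have := hδ' hd
    rw [Real.dist_eq] at this
    exact this.le
  -- continuity of F t in x
  have hFcont : Continuous (F t) := by
    rw [Metric.continuous_iff]
    intro x ε hε
    obtain ⟨δ, hδ, hmod'⟩ := hmod (ε/2) (by linarith)
    refine ⟨δ, hδ, fun x' hx' => ?_⟩
    rw [Real.dist_eq] at hx' ⊢
    have hb : ∀ ω, |ℓ t (x' + η t ω) - ℓ t (x + η t ω)| ≤ ε/2 := by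
      intro ω
      refine hmod' t t (x' + η t ω) (x + η t ω) (by simp [hδ.le]) ?_
      have : x' + η t ω - (x + η t ω) = x' - x := by ring
      rw [this]
      exact hx'.le
    have := int_diff_le μ _ _ (fun _ => ε/2) (hInt t htmem x') (hInt t htmem x)
      (integrable_const _) hb
    rw [integral_const] at this
    simp only [measure_univ, ENNReal.toReal_one, one_smul, smul_eq_mul] at this
    calc |F t x' - F t x| ≤ ε/2 := by simpa using this
      _ < ε := by linarith
  -- key uniform estimate
  have hkey : ∀ ε > (0:ℝ), ∀ᶠ s in nhdsWithin t (Set.Ici t),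
      s ∈ Set.Icc (0:ℝ) T ∧ ∀ x : ℝ, |F s x - F t x| ≤ ε := by
    intro ε hε
    obtain ⟨δ, hδ, hmod'⟩ := hmod (ε/4) (by linarith)
    have hchain : ∀ s y y' : ℝ, |ℓ s y - ℓ s y'| ≤ (ε/4) * (|y - y'|/δ + 1) := fun s =>
      chain_mono (ℓ s) δ (ε/4) hδ (by linarith)
        (fun a b hab => hmod' s s a b (by simp [hδ.le]) hab)
    have hev1 : ∀ᶠ s in nhdsWithin t (Set.Ici t), s ∈ Set.Ico t (min T (t + δ)) :=
      Ico_mem_nhdsGE (lt_min htT (by linarith))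
    have hev2 : ∀ᶠ s in nhdsWithin t (Set.Ici t),
        (∫ ω, |η s ω - η t ω| ∂μ) < δ :=
      (hrc t ⟨ht0, htT⟩).eventually_lt_const hδ
    filter_upwards [hev1, hev2] with s hs1 hs2
    obtain ⟨hts, hsm⟩ := hs1
    have hsT : s < T := lt_of_lt_of_le hsm (min_le_left _ _)
    have hsδ : s - t < δ := by
      have := lt_of_lt_of_le hsm (min_le_right _ _)
      linarith
    have hsmem : s ∈ Set.Icc (0:ℝ) T := ⟨le_trans ht0 hts, hsT.le⟩
    refine ⟨hsmem, ?_⟩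
    intro x
    have hη_int : Integrable (fun ω => |η s ω - η t ω|) μ :=
      ((hint s hsmem).sub (hint t htmem)).abs
    have hb_int : Integrable (fun ω => ε/2 + ε/(4*δ) * |η s ω - η t ω|) μ :=
      (integrable_const _).add (hη_int.const_mul _)
    have hptwise : ∀ ω, |ℓ s (x + η s ω) - ℓ t (x + η t ω)| ≤
        ε/2 + ε/(4*δ) * |η s ω - η t ω| := by
      intro ω
      have A := hchain s (x + η s ω) (x + η t ω)
      have hA' : x + η s ω - (x + η t ω) = η s ω - η t ω := by ring
      rw [hA'] at A
      have B : |ℓ s (x + η t ω) - ℓ t (x + η t ω)| ≤ ε/4 := by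
        refine hmod' s t _ _ ?_ (by simp [hδ.le])
        rw [abs_of_nonneg (by linarith)]
        exact hsδ.le
      calc |ℓ s (x + η s ω) - ℓ t (x + η t ω)|
          ≤ |ℓ s (x + η s ω) - ℓ s (x + η t ω)| + |ℓ s (x + η t ω) - ℓ t (x + η t ω)| :=
            abs_sub_le _ _ _
        _ ≤ (ε/4) * (|η s ω - η t ω|/δ + 1) + ε/4 := add_le_add A B
        _ = ε/2 + ε/(4*δ) * |η s ω - η t ω| := by field_simp; ring
    have hmain := int_diff_le μ _ _ _ (hInt s hsmem x) (hInt t htmem x) hb_int hptwise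
    have hI_nonneg : 0 ≤ ∫ ω, |η s ω - η t ω| ∂μ :=
      integral_nonneg (fun ω => abs_nonneg _)
    have hbval : (∫ ω, (ε/2 + ε/(4*δ) * |η s ω - η t ω|) ∂μ) ≤ ε := by
      rw [integral_add (integrable_const _) (hη_int.const_mul _), integral_const,
        integral_const_mul]
      simp only [probReal_univ, measure_univ, ENNReal.toReal_one, one_smul, smul_eq_mul]
      have h1 : ε/(4*δ) * (∫ ω, |η s ω - η t ω| ∂μ) ≤ ε/(4*δ) * δ := by
        refine mul_le_mul_of_nonneg_left hs2.le ?_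
        positivity
      have h2 : ε/(4*δ) * δ = ε/4 := by field_simp
      nlinarith
    exact le_trans hmain hbval
  -- basic facts about the sets
  have hbdd : ∀ s, BddBelow {x : ℝ | 0 ≤ x ∧ 0 ≤ F s x} := fun s => ⟨0, fun x hx => hx.1⟩
  have hSclosed : IsClosed {x : ℝ | 0 ≤ x ∧ 0 ≤ F t x} := by
    have : {x : ℝ | 0 ≤ x ∧ 0 ≤ F t x} = {x : ℝ | 0 ≤ x} ∩ {x : ℝ | 0 ≤ F t x} := rfl
    rw [this]
    exact (isClosed_le continuous_const continuous_id).inter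
      (isClosed_le continuous_const hFcont)
  set L : ℝ := sInf {x : ℝ | 0 ≤ x ∧ 0 ≤ F t x} with hLdef
  have hLmem : L ∈ {x : ℝ | 0 ≤ x ∧ 0 ≤ F t x} :=
    hSclosed.csInf_mem (hfin t htmem) (hbdd t)
  have hL0 : 0 ≤ L := hLmem.1
  have hLF : 0 ≤ F t L := hLmem.2
  have hLnn : ∀ s ∈ Set.Icc (0:ℝ) T, 0 ≤ sInf {x : ℝ | 0 ≤ x ∧ 0 ≤ F s x} :=
    fun s hs => le_csInf (hfin s hs) (fun x hx => hx.1)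
  have hless : ∀ x : ℝ, 0 ≤ x → x < L → F t x < 0 := by
    intro x hx hxL
    by_contra h
    push_neg at h
    exact absurd (csInf_le (hbdd t) ⟨hx, h⟩) (not_le.mpr hxL)
  -- final argument
  show Filter.Tendsto _ (nhdsWithin t (Set.Ici t)) (nhds L)
  rw [Metric.tendsto_nhds]
  intro ε hε
  have ha : 0 < F t (L + ε/2) := lt_of_le_of_lt hLF (hFlt t htmem L (L + ε/2) (by linarith))
  have hup : ∃ c > (0:ℝ), ∀ s ∈ Set.Icc (0:ℝ) T, (∀ x, |F s x - F t x| ≤ c) →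
      sInf {x : ℝ | 0 ≤ x ∧ 0 ≤ F s x} ≤ L + ε/2 := by
    refine ⟨F t (L + ε/2) / 2, by linarith, ?_⟩
    intro s hs hclose
    have h1 := hclose (L + ε/2)
    have h2 := abs_le.mp h1
    have h3 : 0 ≤ F s (L + ε/2) := by linarith [h2.1]
    exact csInf_le (hbdd s) ⟨by linarith, h3⟩
  have hlow : ∃ c > (0:ℝ), ∀ s ∈ Set.Icc (0:ℝ) T, (∀ x, |F s x - F t x| ≤ c) →
      L - ε/2 ≤ sInf {x : ℝ | 0 ≤ x ∧ 0 ≤ F s x} := by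
    by_cases hcase : ε/2 ≤ L
    · have hb : F t (L - ε/2) < 0 := hless (L - ε/2) (by linarith) (by linarith)
      refine ⟨-(F t (L - ε/2)) / 2, by linarith, ?_⟩
      intro s hs hclose
      have h1 := hclose (L - ε/2)
      have h2 := abs_le.mp h1
      have h3 : F s (L - ε/2) < 0 := by linarith [h2.2]
      refine le_csInf (hfin s hs) ?_
      intro x hx
      by_contra hlt
      push_neg at hlt
      have : F s x ≤ F s (L - ε/2) := hFmono s hs x (L - ε/2) hlt.le
      linarith [hx.2]
    · push_neg at hcase
      refine ⟨1, one_pos, ?_⟩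
      intro s hs _
      have := hLnn s hs
      linarith
  obtain ⟨c1, hc1, h1⟩ := hup
  obtain ⟨c2, hc2, h2⟩ := hlow
  have hmin : 0 < min c1 c2 := lt_min hc1 hc2
  filter_upwards [hkey (min c1 c2) hmin] with s hs
  obtain ⟨hsmem, hclose⟩ := hs
  have hcl1 : ∀ x, |F s x - F t x| ≤ c1 :=
    fun x => le_trans (hclose x) (min_le_left _ _)
  have hcl2 : ∀ x, |F s x - F t x| ≤ c2 :=
    fun x => le_trans (hclose x) (min_le_right _ _)
  have hu := h1 s hsmem hcl1
  have hl := h2 s hsmem hcl2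
  rw [Real.dist_eq]
  have : |sInf {x : ℝ | 0 ≤ x ∧ 0 ≤ F s x} - L| ≤ ε/2 :=
    abs_le.mpr ⟨by linarith, by linarith⟩
  linarith
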